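/- Suppose that in a realization of the segregation process, F is an x-firewall incubator in the initial configuration, and there exist a left-pseudo-transcript and a right-pseudo-transcript of F all of whose partial sums are non-negative. Then F becomes an x-firewall: there is a time at which every node of F carries the label x, and from that time on all nodes of F keep the label x. -/

import Mathlib

open MeasureTheory ProbabilityTheory
open scoped ENNReal NNReal

namespace Schelling

/-- Labels: `true` = type `x`, `false` = type `o`.
A configuration on the ring of `n` nodes assigns a label to each node. -/
abbrev Config (n : ℕ) := ZMod n → Bool

/-- The ±1 value of a label: `x ↦ +1`, `o ↦ -1`. -/
def xval (b : Bool) : ℤ := if b then 1 else -1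

/-- A node `i` is happy (tolerance τ = 1/2) if at least `w` of its `2w` nearest
neighbours `i ± 1, …, i ± w` carry the same label as `i`. -/
def happy (w : ℕ) {n : ℕ} (c : Config n) (i : ZMod n) : Prop :=
  w ≤ ∑ k ∈ Finset.Icc 1 w,
      ((if c (i + (k : ZMod n)) = c i then 1 else 0) +
       (if c (i - (k : ZMod n)) = c i then 1 else 0))

instance (w : ℕ) {n : ℕ} (c : Config n) (i : ZMod n) : Decidable (happy w c i) :=
  Nat.decLe _ _

/-- The result of exchanging the labels of nodes `i` and `j`. -/
def doSwap {n : ℕ} (c : Config n) (i j : ZMod n) : Config n :=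
  Function.update (Function.update c i (c j)) j (c i)

/-- One step of the dynamics: the proposed pair `p` swaps labels iff both nodes are
unhappy and carry opposite labels. -/
def swapStep (w : ℕ) {n : ℕ} (c : Config n) (p : ZMod n × ZMod n) : Config n :=
  if ¬ happy w c p.1 ∧ ¬ happy w c p.2 ∧ c p.1 ≠ c p.2 then doSwap c p.1 p.2 else c

/-- The trajectory of the segregation process started from `c0`, where `pr t` is the
pair of nodes proposed for a swap at time `t`. -/
def traj (w : ℕ) {n : ℕ} (c0 : Config n) (pr : ℕ → ZMod n × ZMod n) : ℕ → Config n
  | 0 => c0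
  | t + 1 => swapStep w (traj w c0 pr t) (pr t)

/-- A configuration is frozen if it contains no pair of unhappy, oppositely labeled
nodes, so that no further swaps are possible. -/
def Frozen (w : ℕ) {n : ℕ} (c : Config n) : Prop :=
  ∀ i j : ZMod n, ¬(¬ happy w c i ∧ ¬ happy w c j ∧ c i ≠ c j)

/-- `c'` is obtained from `c` by one legal swap: two distinct unhappy, oppositely
labeled nodes exchange labels. -/
def LegalSwap (w : ℕ) {n : ℕ} (c c' : Config n) : Prop :=
  ∃ i j : ZMod n, i ≠ j ∧ ¬ happy w c i ∧ ¬ happy w c j ∧ c i ≠ c j ∧ c' = doSwap c i j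

/-- The block of `len` consecutive nodes starting at `s` is monochromatic. -/
def MonochromaticBlock {n : ℕ} (c : Config n) (s : ZMod n) (len : ℕ) : Prop :=
  ∀ k < len, c (s + (k : ZMod n)) = c s

/-- A firewall is a monochromatic block of at least `w + 1` consecutive nodes. -/
def HasFirewall (w : ℕ) {n : ℕ} (c : Config n) : Prop :=
  ∃ (s : ZMod n) (len : ℕ), w + 1 ≤ len ∧ MonochromaticBlock c s len

/-- Node `i` belongs to some firewall of `c`. -/
def InFirewall (w : ℕ) {n : ℕ} (c : Config n) (i : ZMod n) : Prop :=
  ∃ (s : ZMod n) (len : ℕ), w + 1 ≤ len ∧ MonochromaticBlock c s len ∧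
    ∃ k < len, i = s + (k : ZMod n)

instance (n : ℕ) : MeasurableSpace (ZMod n) := ⊤

/-- The uniform probability measure on a finite set `s`. -/
noncomputable def uniformOn {α : Type*} [MeasurableSpace α] (s : Finset α) : Measure α :=
  (s.card : ℝ≥0∞)⁻¹ • ∑ a ∈ s, Measure.dirac a

/-- Unordered proposals are modeled as ordered pairs of distinct nodes. -/
def distinctPairs (n : ℕ) [NeZero n] : Finset (ZMod n × ZMod n) :=
  Finset.univ.filter fun p => p.1 ≠ p.2

/-- The uniform distribution of the initial configuration. -/
noncomputable def configMeasure (n : ℕ) [NeZero n] : Measure (Config n) :=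
  uniformOn (Finset.univ : Finset (Config n))

/-- The uniform distribution of a proposed pair. -/
noncomputable def pairMeasure (n : ℕ) [NeZero n] : Measure (ZMod n × ZMod n) :=
  uniformOn (distinctPairs n)

/-- `(init, prop)` is a realization of the segregation process randomness: for every
finite horizon `T`, the initial configuration together with the first `T` proposals is
distributed as (uniform configuration) × (i.i.d. uniform distinct pairs). -/
def IsSchellingProcess (n : ℕ) [NeZero n] {Ω : Type*} [MeasurableSpace Ω]
    (μ : Measure Ω) (init : Ω → Config n) (prop : ℕ → Ω → ZMod n × ZMod n) : Prop :=
  ∀ T : ℕ, Measure.map (fun ω => (init ω, fun t : Fin T => prop t ω)) μ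
      = (configMeasure n).prod (Measure.pi fun _ : Fin T => pairMeasure n)

/-- The x-bias of node `i`: the sum of the ±1 values over the window `i - w, …, i + w`. -/
def bias (w : ℕ) {n : ℕ} (c : Config n) (i : ZMod n) : ℤ :=
  xval (c i) + ∑ k ∈ Finset.Icc 1 w,
    (xval (c (i + (k : ZMod n))) + xval (c (i - (k : ZMod n))))

/-- An x-firewall incubator: a block `F` of `len` consecutive nodes starting at `s`,
made of a left defender (first `w+1` nodes), an internal block, and a right defender
(last `w+1` nodes), such that every node of `F` has x-bias `> √w`, the minimum bias on
the left defender is attained at its left endpoint, and the minimum bias on the right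
defender is attained at its right endpoint. -/
def IsIncubator (w : ℕ) {n : ℕ} (c : Config n) (s : ZMod n) (len : ℕ) : Prop :=
  2 * (w + 1) ≤ len ∧
  (∀ k < len, Real.sqrt w < ((bias w c (s + (k : ZMod n)) : ℤ) : ℝ)) ∧
  (∀ k < w + 1, bias w c s ≤ bias w c (s + (k : ZMod n))) ∧
  (∀ k < w + 1,
    bias w c (s + ((len - 1 : ℕ) : ZMod n)) ≤ bias w c (s + ((len - 1 - k : ℕ) : ZMod n)))

/-- The sum of the first `j` entries of a ±1 sequence. -/
def chiPrefix {m : ℕ} (B : Fin m → Bool) (j : ℕ) : ℤ :=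
  ∑ i : Fin m, if (i : ℕ) < j then xval (B i) else 0

/-- The total sum of a ±1 sequence. -/
def chi {m : ℕ} (B : Fin m → Bool) : ℤ := ∑ i : Fin m, xval (B i)

/-- The sum of the last `j` entries of a ±1 sequence. -/
def chiSuffix {m : ℕ} (B : Fin m → Bool) (j : ℕ) : ℤ :=
  ∑ i : Fin m, if m - j ≤ (i : ℕ) then xval (B i) else 0

/-- A sequence `B ∈ {±1}^w` is x-promoting if `χ(B) ≥ 5√w` and for all `1 ≤ j ≤ w`,
`χ_j(B) > -2√w` and `χ_{-j}(B) > -2√w`. -/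
def XPromoting (w : ℕ) (B : Fin w → Bool) : Prop :=
  5 * Real.sqrt w ≤ ((chi B : ℤ) : ℝ) ∧
  ∀ j : ℕ, 1 ≤ j → j ≤ w →
    (-2) * Real.sqrt w < ((chiPrefix B j : ℤ) : ℝ) ∧
    (-2) * Real.sqrt w < ((chiSuffix B j : ℤ) : ℝ)

/-- The concatenation of the three length-`w` sequences `B, B', B''`, as a function on
positions `0, …, 3w - 1`. -/
def concat3 (w : ℕ) (B B' B'' : Fin w → Bool) (i : ℕ) : Bool :=
  if h : i < w then B ⟨i, h⟩
  else if h' : i < 2 * w then B' ⟨i - w, by omega⟩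
  else if h'' : i < 3 * w then B'' ⟨i - 2 * w, by omega⟩
  else false

/-- The sign sequences of length `a + b` containing exactly `a` entries `+1`
(i.e. `true`) and `b` entries `-1` (i.e. `false`). -/
def ballotSeqs (a b : ℕ) : Finset (Fin (a + b) → Bool) :=
  Finset.univ.filter fun f => (Finset.univ.filter fun i => f i = true).card = a

/-- Node `i` is, at time `t`, selected to participate in a proposed swap together with
an unhappy, oppositely labeled node. -/
def selectedWith (w : ℕ) {n : ℕ} (c0 : Config n) (pr : ℕ → ZMod n × ZMod n)
    (i : ZMod n) (t : ℕ) : Prop :=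
  ((pr t).1 = i ∧ ¬ happy w (traj w c0 pr t) (pr t).2 ∧
      traj w c0 pr t (pr t).2 ≠ traj w c0 pr t i) ∨
  ((pr t).2 = i ∧ ¬ happy w (traj w c0 pr t) (pr t).1 ∧
      traj w c0 pr t (pr t).1 ≠ traj w c0 pr t i)

/-- The satisfaction time of node `i`: the first time at which `i` is selected in a
proposed swap together with an unhappy, oppositely labeled node (`∞` if never). -/
noncomputable def satTime (w : ℕ) {n : ℕ} (c0 : Config n) (pr : ℕ → ZMod n × ZMod n)
    (i : ZMod n) : ℕ∞ :=
  sInf {t : ℕ∞ | ∃ t' : ℕ, t = (t' : ℕ∞) ∧ selectedWith w c0 pr i t'}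

/-- Node `i` is impatient at time `t` if it is unhappy at time `t` and `t ≤ t*_i`. -/
def Impatient (w : ℕ) {n : ℕ} (c0 : Config n) (pr : ℕ → ZMod n × ZMod n)
    (i : ZMod n) (t : ℕ) : Prop :=
  ¬ happy w (traj w c0 pr t) i ∧ (t : ℕ∞) ≤ satTime w c0 pr i

/-- The left combatants of the block starting at `s`: the nodes of the left attacker
`A_L = {s - w, …, s - 1}` initially labeled `x`, together with the nodes of the left
defender `D_L = {s, …, s + w}` initially labeled `o`. -/
def leftCombatants (w : ℕ) {n : ℕ} [NeZero n] (c0 : Config n) (s : ZMod n) :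
    Finset (ZMod n) :=
  ((Finset.Icc 1 w).image fun k : ℕ => s - (k : ZMod n)).filter (fun i => c0 i = true) ∪
  ((Finset.range (w + 1)).image fun k : ℕ => s + (k : ZMod n)).filter (fun i => c0 i = false)

/-- The right combatants of the block of length `len` starting at `s`: the nodes of the
right attacker `A_R = {s + len, …, s + len + w - 1}` initially labeled `x`, together
with the nodes of the right defender `D_R = {s + len - 1 - w, …, s + len - 1}` initially
labeled `o`. -/
def rightCombatants (w : ℕ) {n : ℕ} [NeZero n] (c0 : Config n) (s : ZMod n) (len : ℕ) :
    Finset (ZMod n) :=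
  ((Finset.range w).image fun k : ℕ => s + ((len + k : ℕ) : ZMod n)).filter
      (fun i => c0 i = true) ∪
  ((Finset.range (w + 1)).image fun k : ℕ => s + ((len - 1 - k : ℕ) : ZMod n)).filter
      (fun i => c0 i = false)

/-- `l` is a pseudo-transcript of the combatant set `C` relative to time `t0`: it
enumerates `C` without repetitions, all combatants with satisfaction time `> t0` come
first (in an arbitrary order, corresponding to an arbitrary permutation of their
signs), and the remaining combatants are listed in decreasing order of satisfaction
time. -/
def IsPseudoTranscript (w : ℕ) {n : ℕ} (c0 : Config n) (pr : ℕ → ZMod n × ZMod n)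
    (t0 : ℕ) (C : Finset (ZMod n)) (l : List (ZMod n)) : Prop :=
  l.Nodup ∧ l.toFinset = C ∧
  ∀ p q : Fin l.length, (p : ℕ) < (q : ℕ) →
    ((t0 : ℕ∞) < satTime w c0 pr (l.get q) → (t0 : ℕ∞) < satTime w c0 pr (l.get p)) ∧
    (satTime w c0 pr (l.get q) ≤ (t0 : ℕ∞) → satTime w c0 pr (l.get p) ≤ (t0 : ℕ∞) →
      satTime w c0 pr (l.get q) ≤ satTime w c0 pr (l.get p))

/-- All partial sums of the sign sequence associated to the list `l` (where each node
contributes the ±1 value of its initial label) are nonnegative. -/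
def NonnegPartialSums {n : ℕ} (c0 : Config n) (l : List (ZMod n)) : Prop :=
  ∀ m ≤ l.length, 0 ≤ ((l.take m).map fun i => xval (c0 i)).sum

/-- Nodes `i` and `j` belong to the same monochromatic run of `c`. -/
def sameRun {n : ℕ} (c : Config n) (i j : ZMod n) : Prop :=
  ∃ k : ℕ, ((j = i + (k : ZMod n)) ∧ ∀ m ≤ k, c (i + (m : ZMod n)) = c i) ∨
           ((j = i - (k : ZMod n)) ∧ ∀ m ≤ k, c (i - (m : ZMod n)) = c i)

/-- The length of the monochromatic run of `c` containing node `i`. -/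
noncomputable def runLength {n : ℕ} (c : Config n) (i : ZMod n) : ℕ :=
  Nat.card {j : ZMod n // sameRun c i j}

/-- The number of unhappy nodes with label `b`. -/
noncomputable def unhappyCount (w : ℕ) {n : ℕ} (c : Config n) (b : Bool) : ℕ :=
  Nat.card {i : ZMod n // c i = b ∧ ¬ happy w c i}

/-- The number of impatient nodes at time `t`. -/
noncomputable def impatientCount (w : ℕ) {n : ℕ} (c0 : Config n)
    (pr : ℕ → ZMod n × ZMod n) (t : ℕ) : ℕ :=
  Nat.card {i : ZMod n // Impatient w c0 pr i t}

/-- The absolute difference between the numbers of unhappy `x`'s and unhappy `o`'s. -/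
noncomputable def unhappyImbalance (w : ℕ) {n : ℕ} (c : Config n) : ℝ :=
  |(unhappyCount w c true : ℝ) - (unhappyCount w c false : ℝ)|

/-- The earliest time at which fewer than `bound` nodes are impatient (`∞` if never). -/
noncomputable def firstFewImpatient (w : ℕ) {n : ℕ} (c0 : Config n)
    (pr : ℕ → ZMod n × ZMod n) (bound : ℝ) : ℕ∞ :=
  sInf {t : ℕ∞ | ∃ t' : ℕ, t = (t' : ℕ∞) ∧ (impatientCount w c0 pr t' : ℝ) < bound}

/-- The earliest time at which the numbers of unhappy `x`'s and unhappy `o`'s differ by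
more than `bound` (`∞` if never). -/
noncomputable def firstImbalance (w : ℕ) {n : ℕ} (c0 : Config n)
    (pr : ℕ → ZMod n × ZMod n) (bound : ℝ) : ℕ∞ :=
  sInf {t : ℕ∞ | ∃ t' : ℕ, t = (t' : ℕ∞) ∧ bound < unhappyImbalance w (traj w c0 pr t')}

/-- In the disjoint-cycles graph `G` (cycles of length `L`), the node reached from `i`
by moving `k` steps forward inside `i`'s cycle. -/
def gnbr (L : ℕ) {n : ℕ} (i : ZMod n) (k : ℕ) : ZMod n :=
  (((i.val / L) * L + ((i.val % L + k) % L) : ℕ) : ZMod n)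

/-- Happiness with respect to the disjoint-cycles graph `G`. -/
def ghappy (w L : ℕ) {n : ℕ} (c : Config n) (i : ZMod n) : Prop :=
  w ≤ ∑ k ∈ Finset.Icc 1 w,
      ((if c (gnbr L i k) = c i then 1 else 0) +
       (if c (gnbr L i (L - k)) = c i then 1 else 0))

instance (w L : ℕ) {n : ℕ} (c : Config n) (i : ZMod n) : Decidable (ghappy w L c i) :=
  Nat.decLe _ _

/-- One step of the segregation dynamics on the disjoint-cycles graph `G`. -/
def gswapStep (w L : ℕ) {n : ℕ} (c : Config n) (p : ZMod n × ZMod n) : Config n :=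
  if ¬ ghappy w L c p.1 ∧ ¬ ghappy w L c p.2 ∧ c p.1 ≠ c p.2 then doSwap c p.1 p.2 else c

/-- The trajectory of the process on `G`, coupled with the ring process by using the
same initial configuration and the same proposed pairs. -/
def gtraj (w L : ℕ) {n : ℕ} (c0 : Config n) (pr : ℕ → ZMod n × ZMod n) : ℕ → Config n
  | 0 => c0
  | t + 1 => gswapStep w L (gtraj w L c0 pr t) (pr t)

/-- The set of nodes within `w` steps of `i` in either graph (including `i`). -/
def nbhd (w L : ℕ) {n : ℕ} (i : ZMod n) : Set (ZMod n) :=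
  {j | ∃ k ≤ w, j = i + (k : ZMod n) ∨ j = i - (k : ZMod n) ∨
        j = gnbr L i k ∨ j = gnbr L i (L - k)}

open Classical in
/-- The tainted set `D(t)`: initially the nodes whose residue mod `L` lies in
`{-w+1, …, w-1}`; whenever a proposed pair touches a tainted node, all nodes within `w`
steps (in either graph) of either member of the pair become tainted. -/
noncomputable def tainted (w L : ℕ) {n : ℕ} (pr : ℕ → ZMod n × ZMod n) :
    ℕ → Set (ZMod n)
  | 0 => {i | i.val % L < w ∨ L - w < i.val % L}
  | t + 1 =>
      if (pr t).1 ∈ tainted w L pr t ∨ (pr t).2 ∈ tainted w L pr t then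
        tainted w L pr t ∪ nbhd w L (pr t).1 ∪ nbhd w L (pr t).2
      else tainted w L pr t

/-! ### Auxiliary lemmas for the proof of Statement 11 -/

section AuxBasic

variable {n : ℕ}

lemma xval_true' : xval true = 1 := rfl
lemma xval_false' : xval false = -1 := rfl

lemma neg_one_le_xval (b : Bool) : -1 ≤ xval b := by cases b <;> simp [xval]
lemma xval_le_one (b : Bool) : xval b ≤ 1 := by cases b <;> simp [xval]

/-- Distinct naturals with difference less than `n` have distinct casts in `ZMod n`. -/
lemma cast_inj_of_sub_lt {a b : ℕ} (hab : a ≤ b) (h : b - a < n)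
    (he : (a : ZMod n) = (b : ZMod n)) : a = b := by
  have h0 : ((b - a : ℕ) : ZMod n) = 0 := by
    rw [Nat.cast_sub hab, ← he, sub_self]
  rw [ZMod.natCast_eq_zero_iff] at h0
  rcases Nat.eq_zero_or_pos (b - a) with h1 | h1
  · omega
  · have := Nat.le_of_dvd h1 h0
    omega

lemma cast_add_ne_neg {a b : ℕ} (hpos : 0 < a + b) (hlt : a + b < n)
    (h : (a : ZMod n) = -(b : ZMod n)) : False := by
  have h0 : ((a + b : ℕ) : ZMod n) = 0 := by
    push_cast
    rw [h]; ring
  rw [ZMod.natCast_eq_zero_iff] at h0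
  have := Nat.le_of_dvd hpos h0
  omega

/-- The happiness sum of a node. -/
def hsum (w : ℕ) (c : Config n) (i : ZMod n) : ℕ :=
  ∑ k ∈ Finset.Icc 1 w,
      ((if c (i + (k : ZMod n)) = c i then 1 else 0) +
       (if c (i - (k : ZMod n)) = c i then 1 else 0))

lemma happy_iff_hsum {w : ℕ} {c : Config n} {i : ZMod n} :
    happy w c i ↔ w ≤ hsum w c i := Iff.rfl

lemma bias_eq_of_true {w : ℕ} {c : Config n} {i : ZMod n} (h : c i = true) :
    bias w c i = 2 * (hsum w c i : ℤ) + 1 - 2 * w := by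
  have key : ∀ k ∈ Finset.Icc 1 w,
      xval (c (i + (k : ZMod n))) + xval (c (i - (k : ZMod n)))
        = 2 * (((if c (i + (k : ZMod n)) = c i then 1 else 0) +
            (if c (i - (k : ZMod n)) = c i then 1 else 0) : ℕ) : ℤ) - 2 := by
    intro k _
    rcases Bool.eq_false_or_eq_true (c (i + (k : ZMod n))) with h1 | h1 <;>
      rcases Bool.eq_false_or_eq_true (c (i - (k : ZMod n))) with h2 | h2 <;>
      simp [xval, h1, h2, h]
  have hcast : (hsum w c i : ℤ) = ∑ k ∈ Finset.Icc 1 w,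
      (((if c (i + (k : ZMod n)) = c i then 1 else 0) +
        (if c (i - (k : ZMod n)) = c i then 1 else 0) : ℕ) : ℤ) := Nat.cast_sum _ _
  unfold bias
  rw [Finset.sum_congr rfl key, h, xval_true']
  rw [Finset.sum_sub_distrib, ← Finset.mul_sum, Finset.sum_const, Nat.card_Icc, hcast]
  simp only [h]
  push_cast
  ring

lemma bias_eq_of_false {w : ℕ} {c : Config n} {i : ZMod n} (h : c i = false) :
    bias w c i = 2 * (w : ℤ) - 1 - 2 * (hsum w c i : ℤ) := by
  have key : ∀ k ∈ Finset.Icc 1 w,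
      xval (c (i + (k : ZMod n))) + xval (c (i - (k : ZMod n)))
        = 2 - 2 * (((if c (i + (k : ZMod n)) = c i then 1 else 0) +
            (if c (i - (k : ZMod n)) = c i then 1 else 0) : ℕ) : ℤ) := by
    intro k _
    rcases Bool.eq_false_or_eq_true (c (i + (k : ZMod n))) with h1 | h1 <;>
      rcases Bool.eq_false_or_eq_true (c (i - (k : ZMod n))) with h2 | h2 <;>
      simp [xval, h1, h2, h]
  have hcast : (hsum w c i : ℤ) = ∑ k ∈ Finset.Icc 1 w,
      (((if c (i + (k : ZMod n)) = c i then 1 else 0) +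
        (if c (i - (k : ZMod n)) = c i then 1 else 0) : ℕ) : ℤ) := Nat.cast_sum _ _
  unfold bias
  rw [Finset.sum_congr rfl key, h, xval_false']
  rw [Finset.sum_sub_distrib, ← Finset.mul_sum, Finset.sum_const, Nat.card_Icc, hcast]
  simp only [h]
  push_cast
  ring

lemma happy_of_bias_true {w : ℕ} {c : Config n} {i : ZMod n} (h : c i = true)
    (hb : 1 ≤ bias w c i) : happy w c i := by
  rw [bias_eq_of_true h] at hb
  rw [happy_iff_hsum]
  omega

lemma unhappy_of_bias_false {w : ℕ} {c : Config n} {i : ZMod n} (h : c i = false)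
    (hb : 1 ≤ bias w c i) : ¬ happy w c i := by
  rw [bias_eq_of_false h] at hb
  rw [happy_iff_hsum]
  omega

lemma doSwap_apply_other {c : Config n} {i j q : ZMod n} (hqi : q ≠ i) (hqj : q ≠ j) :
    doSwap c i j q = c q := by
  unfold doSwap
  rw [Function.update_of_ne hqj, Function.update_of_ne hqi]

lemma doSwap_apply_left {c : Config n} {i j : ZMod n} (hij : i ≠ j) :
    doSwap c i j i = c j := by
  unfold doSwap
  rw [Function.update_of_ne hij, Function.update_self]

lemma doSwap_apply_right {c : Config n} {i j : ZMod n} :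
    doSwap c i j j = c i := by
  unfold doSwap
  rw [Function.update_self]

lemma swapStep_apply_of_happy {w : ℕ} {c : Config n} {p : ZMod n × ZMod n} {q : ZMod n}
    (h : happy w c q) : swapStep w c p q = c q := by
  unfold swapStep
  split_ifs with hcond
  · obtain ⟨h1, h2, h3⟩ := hcond
    have hq1 : q ≠ p.1 := fun e => h1 (e ▸ h)
    have hq2 : q ≠ p.2 := fun e => h2 (e ▸ h)
    exact doSwap_apply_other hq1 hq2
  · rfl

lemma swapStep_change {w : ℕ} {c : Config n} {p : ZMod n × ZMod n} {q : ZMod n}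
    (hne : swapStep w c p q ≠ c q) :
    ¬ happy w c q ∧
      ((p.1 = q ∧ ¬ happy w c p.2 ∧ c p.2 ≠ c q) ∨
       (p.2 = q ∧ ¬ happy w c p.1 ∧ c p.1 ≠ c q)) := by
  unfold swapStep at hne
  split_ifs at hne with hcond
  · obtain ⟨h1, h2, h3⟩ := hcond
    have hp12 : p.1 ≠ p.2 := fun e => h3 (by rw [e])
    by_cases e1 : q = p.1
    · subst e1
      refine ⟨h1, Or.inl ⟨rfl, h2, ?_⟩⟩
      exact fun e => h3 e.symm
    · by_cases e2 : q = p.2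
      · subst e2
        refine ⟨h2, Or.inr ⟨rfl, h1, h3⟩⟩
      · exact absurd (doSwap_apply_other e1 e2) hne
  · exact absurd rfl hne

end AuxBasic

section AuxDyn

variable {w n : ℕ} {c0 : Config n} {pr : ℕ → ZMod n × ZMod n}

lemma traj_succ (t : ℕ) : traj w c0 pr (t + 1) = swapStep w (traj w c0 pr t) (pr t) := rfl

lemma traj_stable_of_happy {t : ℕ} {q : ZMod n} (h : happy w (traj w c0 pr t) q) :
    traj w c0 pr (t + 1) q = traj w c0 pr t q := swapStep_apply_of_happy h

lemma selected_of_change {t : ℕ} {q : ZMod n}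
    (h : traj w c0 pr (t + 1) q ≠ traj w c0 pr t q) :
    selectedWith w c0 pr q t ∧ ¬ happy w (traj w c0 pr t) q := by
  obtain ⟨h1, h2⟩ := swapStep_change h
  refine ⟨?_, h1⟩
  unfold selectedWith
  rcases h2 with ⟨e, hh, hne⟩ | ⟨e, hh, hne⟩
  · exact Or.inl ⟨e, hh, hne⟩
  · exact Or.inr ⟨e, hh, hne⟩

lemma flip_of_selected {t : ℕ} {q : ZMod n} (hsel : selectedWith w c0 pr q t)
    (hunh : ¬ happy w (traj w c0 pr t) q) (hq : traj w c0 pr t q = false) :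
    traj w c0 pr (t + 1) q = true := by
  rw [traj_succ]
  rcases hsel with ⟨e, hh, hne⟩ | ⟨e, hh, hne⟩
  · have hcond : ¬ happy w (traj w c0 pr t) (pr t).1 ∧ ¬ happy w (traj w c0 pr t) (pr t).2 ∧
        traj w c0 pr t (pr t).1 ≠ traj w c0 pr t (pr t).2 := by
      refine ⟨e ▸ hunh, hh, ?_⟩
      rw [e]; exact fun hx => hne hx.symm
    have hne12 : (pr t).1 ≠ (pr t).2 := fun ee => hcond.2.2 (by rw [ee])
    unfold swapStep
    rw [if_pos hcond]
    have : doSwap (traj w c0 pr t) (pr t).1 (pr t).2 q = traj w c0 pr t (pr t).2 := by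
      rw [← e]; exact doSwap_apply_left hne12
    rw [this]
    rcases Bool.eq_false_or_eq_true (traj w c0 pr t (pr t).2) with h2 | h2
    · exact h2
    · exact absurd (h2.trans hq.symm) hne
  · have hcond : ¬ happy w (traj w c0 pr t) (pr t).1 ∧ ¬ happy w (traj w c0 pr t) (pr t).2 ∧
        traj w c0 pr t (pr t).1 ≠ traj w c0 pr t (pr t).2 := by
      refine ⟨hh, e ▸ hunh, ?_⟩
      rw [e]; exact hne
    unfold swapStep
    rw [if_pos hcond]
    have : doSwap (traj w c0 pr t) (pr t).1 (pr t).2 q = traj w c0 pr t (pr t).1 := by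
      rw [← e]; exact doSwap_apply_right
    rw [this]
    rcases Bool.eq_false_or_eq_true (traj w c0 pr t (pr t).1) with h2 | h2
    · exact h2
    · exact absurd (h2.trans hq.symm) hne

lemma change_exists_sel {T : ℕ} {q : ZMod n} (h : traj w c0 pr T q ≠ c0 q) :
    ∃ v < T, selectedWith w c0 pr q v := by
  induction T with
  | zero => exact absurd rfl h
  | succ T ih =>
    by_cases hc : traj w c0 pr (T + 1) q = traj w c0 pr T q
    · rw [hc] at h
      obtain ⟨v, hv, hs⟩ := ih h
      exact ⟨v, by omega, hs⟩
    · exact ⟨T, by omega, (selected_of_change hc).1⟩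

lemma satTime_le_iff {q : ZMod n} {u : ℕ} :
    satTime w c0 pr q ≤ (u : ℕ∞) ↔ ∃ v ≤ u, selectedWith w c0 pr q v := by
  constructor
  · intro h
    by_contra hc
    push_neg at hc
    have hlb : ((u + 1 : ℕ) : ℕ∞) ≤ satTime w c0 pr q := by
      apply le_sInf
      rintro a ⟨t', rfl, hsel⟩
      have ht' : u + 1 ≤ t' := by
        by_contra hle
        exact hc t' (by omega) hsel
      exact_mod_cast ht'
    have h2 := hlb.trans h
    rw [ENat.coe_le_coe] at h2
    omega
  · rintro ⟨v, hv, hsel⟩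
    refine le_trans (sInf_le ⟨v, rfl, hsel⟩) ?_
    exact_mod_cast hv

lemma le_satTime_of_not_sel {q : ZMod n} {t0 : ℕ}
    (h : ∀ v < t0, ¬ selectedWith w c0 pr q v) :
    (t0 : ℕ∞) ≤ satTime w c0 pr q := by
  apply le_sInf
  rintro a ⟨t', rfl, hsel⟩
  have : t0 ≤ t' := by
    by_contra hcon
    exact h t' (by omega) hsel
  exact_mod_cast this

end AuxDyn

section AuxList

lemma list_filter_eq_take {α : Type*} (p : α → Bool) :
    ∀ (l : List α),
      (∀ (i j : Fin l.length), (i : ℕ) < (j : ℕ) → p (l.get j) = true → p (l.get i) = true) →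
      ∃ m ≤ l.length, l.filter p = l.take m
  | [], _ => ⟨0, le_rfl, rfl⟩
  | a :: t, hdc => by
    by_cases hpa : p a = true
    · obtain ⟨m, hm, hfil⟩ := list_filter_eq_take p t (fun i j hij hj => by
        have := hdc i.succ j.succ (by simpa using hij)
        simpa using this (by simpa using hj))
      refine ⟨m + 1, by simpa using hm, ?_⟩
      rw [List.filter_cons_of_pos hpa, hfil, List.take_succ_cons]
    · refine ⟨0, Nat.zero_le _, ?_⟩
      rw [List.take_zero]
      rw [List.filter_eq_nil_iff]
      intro x hx
      rcases List.mem_cons.mp hx with rfl | hxt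
      · simpa using hpa
      · obtain ⟨j, rfl⟩ := List.mem_iff_get.mp hxt
        intro hpj
        apply hpa
        have h0 := hdc ⟨0, by simp⟩ j.succ (by simp)
        simpa using h0 hpj
  termination_by l => l.length

lemma list_map_sum_toFinset {n : ℕ} {l : List (ZMod n)} (h : l.Nodup) (f : ZMod n → ℤ) :
    (l.map f).sum = ∑ q ∈ l.toFinset, f q := by
  induction l with
  | nil => simp
  | cons a t ih =>
    rw [List.map_cons, List.sum_cons, List.toFinset_cons,
      Finset.sum_insert (by simpa using (List.nodup_cons.mp h).1),
      ih (List.nodup_cons.mp h).2]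

lemma sum_xval_filter {n : ℕ} (c : Config n) (S : Finset (ZMod n)) :
    ∑ q ∈ S, xval (c q) = 2 * ((S.filter (fun i => c i = true)).card : ℤ) - S.card := by
  rw [← Finset.sum_filter_add_sum_filter_not S (fun i => c i = true)]
  have h1 : ∑ q ∈ S.filter (fun i => c i = true), xval (c q)
      = ((S.filter (fun i => c i = true)).card : ℤ) := by
    rw [Finset.sum_congr rfl (fun q hq => ?_), Finset.sum_const, nsmul_eq_mul, mul_one]
    rw [(Finset.mem_filter.mp hq).2, xval_true']
  have h2 : ∑ q ∈ S.filter (fun i => ¬ c i = true), xval (c q)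
      = -(((S.filter (fun i => ¬ c i = true)).card : ℤ)) := by
    rw [Finset.sum_congr rfl (fun q hq => ?_), Finset.sum_const, nsmul_eq_mul, mul_neg_one]
    have := (Finset.mem_filter.mp hq).2
    rw [Bool.not_eq_true] at this
    rw [this, xval_false']
  have hcard := Finset.card_filter_add_card_filter_not (s := S)
    (p := fun i => c i = true)
  rw [h1, h2]
  omega

end AuxList

section AuxWindow

variable {n : ℕ}

/-- The window of radius `w` around `p`. -/
def wSet (w : ℕ) (p : ZMod n) : Finset (ZMod n) :=
  insert p (((Finset.Icc 1 w).image (fun k : ℕ => p + (k : ZMod n))) ∪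
    ((Finset.Icc 1 w).image (fun k : ℕ => p - (k : ZMod n))))

lemma mem_wSet {w : ℕ} {p q : ZMod n} :
    q ∈ wSet w p ↔ q = p ∨ (∃ k, 1 ≤ k ∧ k ≤ w ∧ q = p + (k : ZMod n)) ∨
      (∃ k, 1 ≤ k ∧ k ≤ w ∧ q = p - (k : ZMod n)) := by
  simp only [wSet, Finset.mem_insert, Finset.mem_union, Finset.mem_image, Finset.mem_Icc]
  constructor
  · rintro (h | ⟨k, ⟨h1, h2⟩, rfl⟩ | ⟨k, ⟨h1, h2⟩, rfl⟩)
    exacts [Or.inl h, Or.inr (Or.inl ⟨k, h1, h2, rfl⟩), Or.inr (Or.inr ⟨k, h1, h2, rfl⟩)]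
  · rintro (h | ⟨k, h1, h2, rfl⟩ | ⟨k, h1, h2, rfl⟩)
    exacts [Or.inl h, Or.inr (Or.inl ⟨k, ⟨h1, h2⟩, rfl⟩), Or.inr (Or.inr ⟨k, ⟨h1, h2⟩, rfl⟩)]

lemma bias_eq_sum {w : ℕ} (hn : 2 * w < n) (c : Config n) (p : ZMod n) :
    bias w c p = ∑ q ∈ wSet w p, xval (c q) := by
  have hinj1 : Set.InjOn (fun k : ℕ => p + (k : ZMod n)) (Finset.Icc 1 w) := by
    intro a ha b hb hab
    simp only [Finset.coe_Icc, Set.mem_Icc] at ha hb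
    have hc : (a : ZMod n) = (b : ZMod n) := by
      have := hab
      simpa using add_left_cancel this
    rcases le_total a b with h | h
    · exact cast_inj_of_sub_lt h (by omega) hc
    · exact (cast_inj_of_sub_lt h (by omega) hc.symm).symm
  have hinj2 : Set.InjOn (fun k : ℕ => p - (k : ZMod n)) (Finset.Icc 1 w) := by
    intro a ha b hb hab
    simp only [Finset.coe_Icc, Set.mem_Icc] at ha hb
    have hc : (a : ZMod n) = (b : ZMod n) := by
      have := hab
      simp only at this
      have := sub_right_inj.mp this
      exact this
    rcases le_total a b with h | h
    · exact cast_inj_of_sub_lt h (by omega) hc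
    · exact (cast_inj_of_sub_lt h (by omega) hc.symm).symm
  have hdisj : Disjoint ((Finset.Icc 1 w).image (fun k : ℕ => p + (k : ZMod n)))
      ((Finset.Icc 1 w).image (fun k : ℕ => p - (k : ZMod n))) := by
    rw [Finset.disjoint_left]
    rintro q hq1 hq2
    obtain ⟨a, ha, rfl⟩ := Finset.mem_image.mp hq1
    obtain ⟨b, hb, hab⟩ := Finset.mem_image.mp hq2
    simp only [Finset.mem_Icc] at ha hb
    apply cast_add_ne_neg (n := n) (a := a) (b := b) (by omega) (by omega)
    linear_combination hab.symm
  have hp : p ∉ ((Finset.Icc 1 w).image (fun k : ℕ => p + (k : ZMod n))) ∪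
      ((Finset.Icc 1 w).image (fun k : ℕ => p - (k : ZMod n))) := by
    rw [Finset.mem_union]
    rintro (hq | hq)
    · obtain ⟨a, ha, hab⟩ := Finset.mem_image.mp hq
      simp only [Finset.mem_Icc] at ha
      have hc : ((0 : ℕ) : ZMod n) = (a : ZMod n) := by
        push_cast
        linear_combination -hab
      have := cast_inj_of_sub_lt (Nat.zero_le a) (by omega) hc
      omega
    · obtain ⟨a, ha, hab⟩ := Finset.mem_image.mp hq
      simp only [Finset.mem_Icc] at ha
      have hc : ((0 : ℕ) : ZMod n) = (a : ZMod n) := by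
        push_cast
        linear_combination hab
      have := cast_inj_of_sub_lt (Nat.zero_le a) (by omega) hc
      omega
  unfold wSet
  rw [Finset.sum_insert hp, Finset.sum_union hdisj,
    Finset.sum_image (fun a ha b hb => hinj1 (by simpa using ha) (by simpa using hb)),
    Finset.sum_image (fun a ha b hb => hinj2 (by simpa using ha) (by simpa using hb))]
  unfold bias
  rw [Finset.sum_add_distrib]

end AuxWindow

section AuxSets

variable {n : ℕ}

/-- The nodes of the block of length `len` starting at `s`. -/
def Fset (s : ZMod n) (len : ℕ) : Finset (ZMod n) :=
  (Finset.range len).image (fun k : ℕ => s + (k : ZMod n))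

def ALs (w : ℕ) (s : ZMod n) : Finset (ZMod n) :=
  (Finset.Icc 1 w).image (fun k : ℕ => s - (k : ZMod n))

def DLs (w : ℕ) (s : ZMod n) : Finset (ZMod n) :=
  (Finset.range (w + 1)).image (fun k : ℕ => s + (k : ZMod n))

def ARs (w : ℕ) (s : ZMod n) (len : ℕ) : Finset (ZMod n) :=
  (Finset.range w).image (fun k : ℕ => s + ((len + k : ℕ) : ZMod n))

def DRs (w : ℕ) (s : ZMod n) (len : ℕ) : Finset (ZMod n) :=
  (Finset.range (w + 1)).image (fun k : ℕ => s + ((len - 1 - k : ℕ) : ZMod n))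

lemma leftCombatants_eq (w : ℕ) [NeZero n] (c0 : Config n) (s : ZMod n) :
    leftCombatants w c0 s =
      (ALs w s).filter (fun i => c0 i = true) ∪
        (DLs w s).filter (fun i => c0 i = false) := rfl

lemma rightCombatants_eq (w : ℕ) [NeZero n] (c0 : Config n) (s : ZMod n) (len : ℕ) :
    rightCombatants w c0 s len =
      (ARs w s len).filter (fun i => c0 i = true) ∪
        (DRs w s len).filter (fun i => c0 i = false) := rfl

lemma shift_inj {s : ZMod n} {a b : ℕ} (hab : a ≤ b) (hlt : b - a < n)
    (h : s + (a : ZMod n) = s + (b : ZMod n)) : a = b :=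
  cast_inj_of_sub_lt hab hlt (add_left_cancel h)

lemma mem_Fset {s : ZMod n} {len : ℕ} {q : ZMod n} :
    q ∈ Fset s len ↔ ∃ k, k < len ∧ q = s + (k : ZMod n) := by
  simp only [Fset, Finset.mem_image, Finset.mem_range]
  constructor
  · rintro ⟨k, hk, rfl⟩; exact ⟨k, hk, rfl⟩
  · rintro ⟨k, hk, rfl⟩; exact ⟨k, hk, rfl⟩

lemma card_ALs {w : ℕ} (s : ZMod n) (hn : 2 * w < n) : (ALs w s).card = w := by
  have hinj : Set.InjOn (fun k : ℕ => s - (k : ZMod n)) (Finset.Icc 1 w) := by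
    intro a ha b hb hab
    simp only [Finset.coe_Icc, Set.mem_Icc] at ha hb
    have hc : (a : ZMod n) = (b : ZMod n) := sub_right_inj.mp hab
    rcases le_total a b with h | h
    · exact cast_inj_of_sub_lt h (by omega) hc
    · exact (cast_inj_of_sub_lt h (by omega) hc.symm).symm
  rw [ALs, Finset.card_image_of_injOn hinj, Nat.card_Icc]
  omega

lemma card_DLs {w : ℕ} (s : ZMod n) (hn : 2 * w < n) : (DLs w s).card = w + 1 := by
  have hinj : Set.InjOn (fun k : ℕ => s + (k : ZMod n)) (Finset.range (w + 1)) := by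
    intro a ha b hb hab
    simp only [Finset.coe_range, Set.mem_Iio] at ha hb
    rcases le_total a b with h | h
    · exact shift_inj h (by omega) hab
    · exact (shift_inj h (by omega) hab.symm).symm
  rw [DLs, Finset.card_image_of_injOn hinj, Finset.card_range]

lemma card_ARs {w : ℕ} (s : ZMod n) (len : ℕ) (hn : 2 * w < n) :
    (ARs w s len).card = w := by
  have hinj : Set.InjOn (fun k : ℕ => s + ((len + k : ℕ) : ZMod n)) (Finset.range w) := by
    intro a ha b hb hab
    simp only [Finset.coe_range, Set.mem_Iio] at ha hb
    rcases le_total a b with h | h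
    · have := shift_inj (Nat.add_le_add_left h len) (by omega) hab
      omega
    · have := shift_inj (Nat.add_le_add_left h len) (by omega) hab.symm
      omega
  rw [ARs, Finset.card_image_of_injOn hinj, Finset.card_range]

lemma card_DRs {w : ℕ} (s : ZMod n) {len : ℕ} (hn : 2 * w < n)
    (hlen : 2 * (w + 1) ≤ len) : (DRs w s len).card = w + 1 := by
  have hinj : Set.InjOn (fun k : ℕ => s + ((len - 1 - k : ℕ) : ZMod n))
      (Finset.range (w + 1)) := by
    intro a ha b hb hab
    simp only [Finset.coe_range, Set.mem_Iio] at ha hb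
    rcases le_total (len - 1 - a) (len - 1 - b) with h | h
    · have := shift_inj h (by omega) hab
      omega
    · have := shift_inj h (by omega) hab.symm
      omega
  rw [DRs, Finset.card_image_of_injOn hinj, Finset.card_range]

lemma wSet_s_eq {w : ℕ} (s : ZMod n) (hn : 2 * w < n) :
    wSet w s = ALs w s ∪ DLs w s := by
  ext q
  rw [mem_wSet, Finset.mem_union]
  constructor
  · rintro (rfl | ⟨k, h1, h2, rfl⟩ | ⟨k, h1, h2, rfl⟩)
    · right
      exact Finset.mem_image.mpr ⟨0, by simp, by simp⟩
    · right
      exact Finset.mem_image.mpr ⟨k, Finset.mem_range.mpr (by omega), rfl⟩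
    · left
      exact Finset.mem_image.mpr ⟨k, Finset.mem_Icc.mpr ⟨h1, h2⟩, rfl⟩
  · rintro (hq | hq)
    · obtain ⟨k, hk, rfl⟩ := Finset.mem_image.mp hq
      simp only [Finset.mem_Icc] at hk
      exact Or.inr (Or.inr ⟨k, hk.1, hk.2, rfl⟩)
    · obtain ⟨k, hk, rfl⟩ := Finset.mem_image.mp hq
      simp only [Finset.mem_range] at hk
      rcases Nat.eq_zero_or_pos k with rfl | hk0
      · exact Or.inl (by simp)
      · exact Or.inr (Or.inl ⟨k, by omega, by omega, rfl⟩)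

lemma disj_ALs_DLs {w : ℕ} (s : ZMod n) (hn : 2 * w < n) :
    Disjoint (ALs w s) (DLs w s) := by
  rw [Finset.disjoint_left]
  intro q h1 h2
  obtain ⟨a, ha, rfl⟩ := Finset.mem_image.mp h1
  obtain ⟨b, hb, hq⟩ := Finset.mem_image.mp h2
  simp only [Finset.mem_Icc] at ha
  simp only [Finset.mem_range] at hb
  refine cast_add_ne_neg (a := b) (b := a) ?_ ?_ (by linear_combination hq) <;> omega

lemma bias_left_id (w : ℕ) (s : ZMod n) (c0 : Config n) (hn : 2 * w < n) :
    bias w c0 s = 2 * (((ALs w s).filter (fun i => c0 i = true)).card : ℤ)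
      - 2 * (((DLs w s).filter (fun i => c0 i = false)).card : ℤ) + 1 := by
  rw [bias_eq_sum hn, wSet_s_eq s hn, Finset.sum_union (disj_ALs_DLs s hn),
    sum_xval_filter, sum_xval_filter, card_ALs s hn, card_DLs s hn]
  have hrw : (DLs w s).filter (fun i => c0 i = false)
      = (DLs w s).filter (fun i => ¬ c0 i = true) := by
    apply Finset.filter_congr
    intro q _
    simp [Bool.not_eq_true]
  have hsplit : ((DLs w s).filter (fun i => c0 i = true)).card +
      ((DLs w s).filter (fun i => c0 i = false)).card = w + 1 := by
    rw [hrw, Finset.card_filter_add_card_filter_not (s := DLs w s)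
      (p := fun i => c0 i = true), card_DLs s hn]
  omega

lemma wSet_e_eq {w len : ℕ} (s : ZMod n) (hn : 2 * w < n) (hlen : 2 * (w + 1) ≤ len) :
    wSet w (s + ((len - 1 : ℕ) : ZMod n)) = ARs w s len ∪ DRs w s len := by
  ext q
  rw [mem_wSet, Finset.mem_union]
  constructor
  · rintro (rfl | ⟨k, h1, h2, rfl⟩ | ⟨k, h1, h2, rfl⟩)
    · right
      refine Finset.mem_image.mpr ⟨0, Finset.mem_range.mpr (by omega), ?_⟩
      norm_num
    · left
      refine Finset.mem_image.mpr ⟨k - 1, Finset.mem_range.mpr (by omega), ?_⟩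
      have he : len + (k - 1) = (len - 1) + k := by omega
      rw [he]
      push_cast
      ring
    · right
      refine Finset.mem_image.mpr ⟨k, Finset.mem_range.mpr (by omega), ?_⟩
      have he : len - 1 - k = (len - 1) - k := rfl
      rw [he, Nat.cast_sub (by omega)]
      ring
  · rintro (hq | hq)
    · obtain ⟨j, hj, rfl⟩ := Finset.mem_image.mp hq
      simp only [Finset.mem_range] at hj
      refine Or.inr (Or.inl ⟨j + 1, by omega, by omega, ?_⟩)
      have he : len + j = (len - 1) + (j + 1) := by omega
      rw [he]
      push_cast
      ring
    · obtain ⟨k, hk, rfl⟩ := Finset.mem_image.mp hq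
      simp only [Finset.mem_range] at hk
      rcases Nat.eq_zero_or_pos k with rfl | hk0
      · exact Or.inl (by norm_num)
      · refine Or.inr (Or.inr ⟨k, by omega, by omega, ?_⟩)
        rw [Nat.cast_sub (show k ≤ len - 1 by omega)]
        ring

lemma disj_ARs_DRs {w len : ℕ} (s : ZMod n) (hn : 2 * w < n)
    (hlen : 2 * (w + 1) ≤ len) : Disjoint (ARs w s len) (DRs w s len) := by
  rw [Finset.disjoint_left]
  intro q h1 h2
  obtain ⟨a, ha, rfl⟩ := Finset.mem_image.mp h1
  obtain ⟨b, hb, hq⟩ := Finset.mem_image.mp h2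
  simp only [Finset.mem_range] at ha hb
  have := shift_inj (s := s) (a := len - 1 - b) (b := len + a) (by omega) (by omega) hq
  omega

lemma bias_right_id (w : ℕ) (s : ZMod n) {len : ℕ} (c0 : Config n) (hn : 2 * w < n)
    (hlen : 2 * (w + 1) ≤ len) :
    bias w c0 (s + ((len - 1 : ℕ) : ZMod n))
      = 2 * (((ARs w s len).filter (fun i => c0 i = true)).card : ℤ)
        - 2 * (((DRs w s len).filter (fun i => c0 i = false)).card : ℤ) + 1 := by
  rw [bias_eq_sum hn, wSet_e_eq s hn hlen, Finset.sum_union (disj_ARs_DRs s hn hlen),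
    sum_xval_filter, sum_xval_filter, card_ARs s len hn, card_DRs s hn hlen]
  have hrw : (DRs w s len).filter (fun i => c0 i = false)
      = (DRs w s len).filter (fun i => ¬ c0 i = true) := by
    apply Finset.filter_congr
    intro q _
    simp [Bool.not_eq_true]
  have hsplit : ((DRs w s len).filter (fun i => c0 i = true)).card +
      ((DRs w s len).filter (fun i => c0 i = false)).card = w + 1 := by
    rw [hrw, Finset.card_filter_add_card_filter_not (s := DRs w s len)
      (p := fun i => c0 i = true), card_DRs s hn hlen]
  omega

lemma DLs_subset_wSet {w : ℕ} (s : ZMod n) (hn : 2 * w < n) {k : ℕ} (hk : k ≤ w) :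
    DLs w s ⊆ wSet w (s + (k : ZMod n)) := by
  intro q hq
  obtain ⟨k', hk', rfl⟩ := Finset.mem_image.mp hq
  simp only [Finset.mem_range] at hk'
  rw [mem_wSet]
  rcases lt_trichotomy k' k with h | rfl | h
  · refine Or.inr (Or.inr ⟨k - k', by omega, by omega, ?_⟩)
    rw [Nat.cast_sub (le_of_lt h)]
    ring
  · exact Or.inl rfl
  · refine Or.inr (Or.inl ⟨k' - k, by omega, by omega, ?_⟩)
    rw [Nat.cast_sub (le_of_lt h)]
    ring

lemma DRs_subset_wSet {w len : ℕ} (s : ZMod n) (hn : 2 * w < n)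
    (hlen : 2 * (w + 1) ≤ len) {k : ℕ} (hk1 : len ≤ k + w + 1) (hk2 : k < len) :
    DRs w s len ⊆ wSet w (s + (k : ZMod n)) := by
  intro q hq
  obtain ⟨k', hk', rfl⟩ := Finset.mem_image.mp hq
  simp only [Finset.mem_range] at hk'
  rw [mem_wSet]
  rcases lt_trichotomy (len - 1 - k') k with h | he | h
  · refine Or.inr (Or.inr ⟨k - (len - 1 - k'), by omega, by omega, ?_⟩)
    rw [Nat.cast_sub (le_of_lt h)]
    ring
  · rw [he]
    exact Or.inl rfl
  · refine Or.inr (Or.inl ⟨(len - 1 - k') - k, by omega, by omega, ?_⟩)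
    rw [Nat.cast_sub (le_of_lt h)]
    ring

lemma cover_left {w len : ℕ} (s : ZMod n) (hn : 2 * w < n) (hlen : 2 * (w + 1) ≤ len)
    {k : ℕ} (hk : k ≤ w) :
    ∀ q ∈ wSet w (s + (k : ZMod n)), q ∈ Fset s len ∨ q ∈ ALs w s := by
  intro q hq
  rcases mem_wSet.mp hq with rfl | ⟨j, hj1, hj2, rfl⟩ | ⟨j, hj1, hj2, rfl⟩
  · exact Or.inl (mem_Fset.mpr ⟨k, by omega, rfl⟩)
  · refine Or.inl (mem_Fset.mpr ⟨k + j, by omega, ?_⟩)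
    push_cast
    ring
  · rcases le_or_gt j k with h | h
    · refine Or.inl (mem_Fset.mpr ⟨k - j, by omega, ?_⟩)
      rw [Nat.cast_sub h]
      ring
    · refine Or.inr (Finset.mem_image.mpr ⟨j - k, Finset.mem_Icc.mpr ⟨by omega, by omega⟩, ?_⟩)
      rw [Nat.cast_sub (le_of_lt h)]
      ring

lemma cover_right {w len : ℕ} (s : ZMod n) (hn : 2 * w < n) (hlen : 2 * (w + 1) ≤ len)
    {k : ℕ} (hk1 : len ≤ k + w + 1) (hk2 : k < len) :
    ∀ q ∈ wSet w (s + (k : ZMod n)), q ∈ Fset s len ∨ q ∈ ARs w s len := by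
  intro q hq
  rcases mem_wSet.mp hq with rfl | ⟨j, hj1, hj2, rfl⟩ | ⟨j, hj1, hj2, rfl⟩
  · exact Or.inl (mem_Fset.mpr ⟨k, hk2, rfl⟩)
  · rcases lt_or_ge (k + j) len with h | h
    · refine Or.inl (mem_Fset.mpr ⟨k + j, h, ?_⟩)
      push_cast
      ring
    · refine Or.inr (Finset.mem_image.mpr ⟨k + j - len, Finset.mem_range.mpr (by omega), ?_⟩)
      have he : len + (k + j - len) = k + j := by omega
      rw [he]
      push_cast
      ring
  · refine Or.inl (mem_Fset.mpr ⟨k - j, by omega, ?_⟩)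
    rw [Nat.cast_sub (by omega)]
    ring

lemma cover_mid {w len : ℕ} (s : ZMod n) {k : ℕ} (hk1 : w < k) (hk2 : k + w < len) :
    ∀ q ∈ wSet w (s + (k : ZMod n)), q ∈ Fset s len := by
  intro q hq
  rcases mem_wSet.mp hq with rfl | ⟨j, hj1, hj2, rfl⟩ | ⟨j, hj1, hj2, rfl⟩
  · exact mem_Fset.mpr ⟨k, by omega, rfl⟩
  · refine mem_Fset.mpr ⟨k + j, by omega, ?_⟩
    push_cast
    ring
  · refine mem_Fset.mpr ⟨k - j, by omega, ?_⟩
    rw [Nat.cast_sub (by omega)]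
    ring

end AuxSets

section AuxCore

open scoped Classical

variable {w n : ℕ} {c0 : Config n} {pr : ℕ → ZMod n × ZMod n}

/-- `q` has been selected (with an unhappy, oppositely labeled partner) by time `u`. -/
def SelBy (w : ℕ) {n : ℕ} (c0 : Config n) (pr : ℕ → ZMod n × ZMod n)
    (q : ZMod n) (u : ℕ) : Prop :=
  ∃ v ≤ u, selectedWith w c0 pr q v

lemma stay_true {Fs : Finset (ZMod n)} {T : ℕ}
    (hinv : ∀ v < T, ∀ q ∈ Fs, 1 ≤ bias w (traj w c0 pr v) q) :
    ∀ v ≤ T, ∀ q ∈ Fs, c0 q = true → traj w c0 pr v q = true := by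
  intro v
  induction v with
  | zero => intro _ q _ hq; exact hq
  | succ v ih =>
    intro hv q hqF hq
    have hprev := ih (by omega) q hqF hq
    have hb := hinv v (by omega) q hqF
    rw [traj_stable_of_happy (happy_of_bias_true hprev hb)]
    exact hprev

lemma def_flipped {Fs : Finset (ZMod n)} {T : ℕ} {q : ZMod n}
    (hinv : ∀ v < T, ∀ q ∈ Fs, 1 ≤ bias w (traj w c0 pr v) q)
    (hqF : q ∈ Fs) (hq : c0 q = false)
    (hsel : ∃ v < T, selectedWith w c0 pr q v) :
    traj w c0 pr T q = true := by
  obtain ⟨v1, hv1, hsel1⟩ := hsel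
  have hex : ∃ v, selectedWith w c0 pr q v := ⟨v1, hsel1⟩
  have hv0sel : selectedWith w c0 pr q (Nat.find hex) := Nat.find_spec hex
  have hv0le : Nat.find hex ≤ v1 := Nat.find_min' hex hsel1
  set v0 := Nat.find hex with hv0def
  have hfalse : ∀ v' ≤ v0, traj w c0 pr v' q = false := by
    intro v'
    induction v' with
    | zero => intro _; exact hq
    | succ v' ih =>
      intro hv'
      by_cases hch : traj w c0 pr (v' + 1) q = traj w c0 pr v' q
      · rw [hch]; exact ih (by omega)
      · exact absurd ((selected_of_change hch).1) (Nat.find_min hex (by omega))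
  have hfv0 : traj w c0 pr v0 q = false := hfalse v0 le_rfl
  have hunh : ¬ happy w (traj w c0 pr v0) q :=
    unhappy_of_bias_false hfv0 (hinv v0 (by omega) q hqF)
  have hflip : traj w c0 pr (v0 + 1) q = true := flip_of_selected hv0sel hunh hfv0
  have hstay : ∀ d, v0 + 1 + d ≤ T → traj w c0 pr (v0 + 1 + d) q = true := by
    intro d
    induction d with
    | zero => intro _; exact hflip
    | succ d ih =>
      intro hd
      have hprev := ih (by omega)
      have hb := hinv (v0 + 1 + d) (by omega) q hqF
      have hst : traj w c0 pr (v0 + 1 + d + 1) q = traj w c0 pr (v0 + 1 + d) q :=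
        traj_stable_of_happy (happy_of_bias_true hprev hb)
      rw [show v0 + 1 + (d + 1) = v0 + 1 + d + 1 from rfl, hst]
      exact hprev
  have := hstay (T - (v0 + 1)) (by omega)
  rwa [show v0 + 1 + (T - (v0 + 1)) = T by omega] at this

lemma core_bias (hn : 2 * w < n)
    (Fs att dfd : Finset (ZMod n)) (u : ℕ)
    (hatt : ∀ q ∈ att, c0 q = true) (hdef : ∀ q ∈ dfd, c0 q = false)
    (hdefF : dfd ⊆ Fs)
    (hinv : ∀ v ≤ u, ∀ q ∈ Fs, 1 ≤ bias w (traj w c0 pr v) q)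
    (p : ZMod n)
    (hdw : dfd ⊆ wSet w p)
    (hcover : ∀ q ∈ wSet w p, q ∉ Fs → c0 q = true → q ∈ att)
    (hcount : (dfd.card : ℤ) - ((dfd.filter (fun i => SelBy w c0 pr i u)).card : ℤ)
      ≤ (att.card : ℤ) - ((att.filter (fun i => SelBy w c0 pr i u)).card : ℤ))
    (hbias0 : 2 * (att.card : ℤ) - 2 * (dfd.card : ℤ) + 1 ≤ bias w c0 p) :
    1 ≤ bias w (traj w c0 pr (u + 1)) p := by
  set c1 := traj w c0 pr (u + 1) with hc1
  set dS := dfd.filter (fun i => SelBy w c0 pr i u) with hdS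
  set aS := att.filter (fun i => SelBy w c0 pr i u) with haS
  have hinv' : ∀ v < u + 1, ∀ q ∈ Fs, 1 ≤ bias w (traj w c0 pr v) q :=
    fun v hv => hinv v (by omega)
  have hpt : ∀ q ∈ wSet w p,
      (if q ∈ dS then (2 : ℤ) else 0) - (if q ∈ aS then (2 : ℤ) else 0)
        ≤ xval (c1 q) - xval (c0 q) := by
    intro q hq
    by_cases hqd : q ∈ dS
    · have hqdfd : q ∈ dfd := (Finset.mem_filter.mp hqd).1
      have hq0 : c0 q = false := hdef q hqdfd
      have hq1 : c1 q = true := by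
        obtain ⟨v, hv, hs⟩ := (Finset.mem_filter.mp hqd).2
        exact def_flipped hinv' (hdefF hqdfd) hq0 ⟨v, by omega, hs⟩
      have hqa : q ∉ aS := by
        intro hmem
        have := hatt q (Finset.mem_filter.mp hmem).1
        rw [hq0] at this
        exact Bool.false_ne_true this
      rw [if_pos hqd, if_neg hqa, hq1, hq0, xval_true', xval_false']
      norm_num
    · by_cases hqa : q ∈ aS
      · rw [if_neg hqd, if_pos hqa]
        have h1 := neg_one_le_xval (c1 q)
        have h2 := xval_le_one (c0 q)
        linarith
      · rw [if_neg hqd, if_neg hqa]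
        rcases Bool.eq_false_or_eq_true (c0 q) with h0 | h0
        · have hc1q : c1 q = true := by
            by_contra hne
            have hne' : c1 q ≠ c0 q := by rw [h0]; exact hne
            obtain ⟨v, hv, hs⟩ := change_exists_sel hne'
            have hSel : SelBy w c0 pr q u := ⟨v, by omega, hs⟩
            by_cases hqF : q ∈ Fs
            · exact hne (stay_true hinv' (u + 1) le_rfl q hqF h0)
            · exact hqa (Finset.mem_filter.mpr ⟨hcover q hq hqF h0, hSel⟩)
          rw [hc1q, h0]
          norm_num
        · rw [h0, xval_false']
          have := neg_one_le_xval (c1 q)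
          linarith
  have hsum := Finset.sum_le_sum hpt
  have hdSsub : dS ⊆ wSet w p := (Finset.filter_subset _ _).trans hdw
  have hLHS : ∑ q ∈ wSet w p, ((if q ∈ dS then (2 : ℤ) else 0) - (if q ∈ aS then (2 : ℤ) else 0))
      = 2 * (dS.card : ℤ) - 2 * (((wSet w p) ∩ aS).card : ℤ) := by
    rw [Finset.sum_sub_distrib, Finset.sum_ite_mem, Finset.sum_ite_mem,
      Finset.sum_const, Finset.sum_const, Finset.inter_eq_right.mpr hdSsub]
    simp only [nsmul_eq_mul]
    ring
  have hRHS : ∑ q ∈ wSet w p, (xval (c1 q) - xval (c0 q))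
      = bias w c1 p - bias w c0 p := by
    rw [Finset.sum_sub_distrib, ← bias_eq_sum hn, ← bias_eq_sum hn]
  rw [hLHS, hRHS] at hsum
  have hcard2 : (((wSet w p) ∩ aS).card : ℤ) ≤ (aS.card : ℤ) := by
    exact_mod_cast Finset.card_le_card Finset.inter_subset_right
  linarith

lemma count_of_transcript [NeZero n] {t0 u : ℕ} (hu : u < t0)
    (att dfd : Finset (ZMod n))
    (hatt : ∀ q ∈ att, c0 q = true) (hdef : ∀ q ∈ dfd, c0 q = false)
    (l : List (ZMod n))
    (hT : IsPseudoTranscript w c0 pr t0 (att ∪ dfd) l)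
    (hS : NonnegPartialSums c0 l) :
    (dfd.card : ℤ) - ((dfd.filter (fun i => SelBy w c0 pr i u)).card : ℤ)
      ≤ (att.card : ℤ) - ((att.filter (fun i => SelBy w c0 pr i u)).card : ℤ) := by
  obtain ⟨hnd, htf, hord⟩ := hT
  set p : ZMod n → Bool := fun i => decide ((u : ℕ∞) < satTime w c0 pr i) with hp
  have hpiff : ∀ i, (p i = true) ↔ ¬ SelBy w c0 pr i u := by
    intro i
    rw [hp]
    simp only [decide_eq_true_eq]
    rw [← not_le, satTime_le_iff]
    exact Iff.rfl
  have hult : ((u : ℕ∞)) < ((t0 : ℕ∞)) := by exact_mod_cast hu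
  have hdc : ∀ (i j : Fin l.length), (i : ℕ) < (j : ℕ) →
      p (l.get j) = true → p (l.get i) = true := by
    intro i j hij hj
    have hj' : (u : ℕ∞) < satTime w c0 pr (l.get j) := by
      have := hj
      rw [hp] at this
      simpa using this
    suffices hgoal : (u : ℕ∞) < satTime w c0 pr (l.get i) by
      rw [hp]
      simpa using hgoal
    obtain ⟨h1, h2⟩ := hord i j hij
    rcases le_or_gt (satTime w c0 pr (l.get j)) ((t0 : ℕ) : ℕ∞) with hle | hlt
    · rcases le_or_gt (satTime w c0 pr (l.get i)) ((t0 : ℕ) : ℕ∞) with hle' | hlt'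
      · exact lt_of_lt_of_le hj' (h2 hle hle')
      · exact lt_trans hult hlt'
    · exact lt_trans hult (h1 hlt)
  obtain ⟨m, hm, hfil⟩ := list_filter_eq_take p l hdc
  have hnn := hS m hm
  rw [← hfil] at hnn
  rw [list_map_sum_toFinset (hnd.filter p) _] at hnn
  rw [List.toFinset_filter, htf] at hnn
  have hdisj : Disjoint att dfd := by
    rw [Finset.disjoint_left]
    intro q h1 h2
    have := hatt q h1
    rw [hdef q h2] at this
    exact Bool.false_ne_true this
  rw [Finset.filter_union,
    Finset.sum_union (Finset.disjoint_filter_filter hdisj)] at hnn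
  have h1 : ∑ q ∈ att.filter (fun i => p i = true), xval (c0 q)
      = ((att.filter (fun i => p i = true)).card : ℤ) := by
    rw [Finset.sum_congr rfl (fun q hq => ?_), Finset.sum_const, nsmul_eq_mul, mul_one]
    rw [hatt q (Finset.mem_filter.mp hq).1, xval_true']
  have h2 : ∑ q ∈ dfd.filter (fun i => p i = true), xval (c0 q)
      = -(((dfd.filter (fun i => p i = true)).card : ℤ)) := by
    rw [Finset.sum_congr rfl (fun q hq => ?_), Finset.sum_const, nsmul_eq_mul, mul_neg_one]
    rw [hdef q (Finset.mem_filter.mp hq).1, xval_false']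
  rw [h1, h2] at hnn
  have hsplitA : (att.filter (fun i => p i = true)).card
      + (att.filter (fun i => SelBy w c0 pr i u)).card = att.card := by
    have hcongr : att.filter (fun i => p i = true)
        = att.filter (fun i => ¬ SelBy w c0 pr i u) := by
      apply Finset.filter_congr
      intro q _
      exact hpiff q
    rw [hcongr, add_comm, Finset.card_filter_add_card_filter_not]
  have hsplitD : (dfd.filter (fun i => p i = true)).card
      + (dfd.filter (fun i => SelBy w c0 pr i u)).card = dfd.card := by
    have hcongr : dfd.filter (fun i => p i = true)
        = dfd.filter (fun i => ¬ SelBy w c0 pr i u) := by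
      apply Finset.filter_congr
      intro q _
      exact hpiff q
    rw [hcongr, add_comm, Finset.card_filter_add_card_filter_not]
  omega

end AuxCore

/-- If the whole block is labeled `x`, every node of the block is happy. -/
lemma happy_of_all_true {w n : ℕ} {c : Config n} {s : ZMod n} {len : ℕ}
    (hlen : 2 * (w + 1) ≤ len)
    (hall : ∀ k < len, c (s + (k : ZMod n)) = true) {k : ℕ} (hk : k < len) :
    happy w c (s + (k : ZMod n)) := by
  rw [happy_iff_hsum]
  unfold hsum
  have hck : c (s + (k : ZMod n)) = true := hall k hk
  have hterm : ∀ j ∈ Finset.Icc 1 w, 1 ≤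
      ((if c ((s + (k : ZMod n)) + (j : ZMod n)) = c (s + (k : ZMod n)) then 1 else 0) +
       (if c ((s + (k : ZMod n)) - (j : ZMod n)) = c (s + (k : ZMod n)) then 1 else 0)) := by
    intro j hj
    simp only [Finset.mem_Icc] at hj
    rcases le_or_gt j k with h | h
    · have he : (s + (k : ZMod n)) - (j : ZMod n) = s + ((k - j : ℕ) : ZMod n) := by
        rw [Nat.cast_sub h]; ring
      rw [he, hall (k - j) (show k - j < len by omega), hck]
      simp
    · have he : (s + (k : ZMod n)) + (j : ZMod n) = s + ((k + j : ℕ) : ZMod n) := by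
        push_cast; ring
      rw [he, hall (k + j) (show k + j < len by omega), hck]
      simp
  calc w = ∑ _j ∈ Finset.Icc 1 w, 1 := by
        rw [Finset.sum_const, Nat.card_Icc, smul_eq_mul]; omega
  _ ≤ _ := Finset.sum_le_sum hterm

/-- If `F` (the block of length `len` starting at `s`) is an
x-firewall incubator in the initial configuration, `t0` is a time at which no node of
`F` is impatient, and there are a left- and a right-pseudo-transcript of `F` all of
whose partial sums are nonnegative, then `F` becomes an x-firewall: from some time on,
every node of `F` carries (and keeps) the label `x`. -/
theorem firewall_forms (w n : ℕ) (hw : 1 ≤ w) (hn : 2 * w < n) [NeZero n]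
    (c0 : Config n) (pr : ℕ → ZMod n × ZMod n)
    (s : ZMod n) (len : ℕ) (hinc : IsIncubator w c0 s len)
    (t0 : ℕ) (ht0 : ∀ k < len, ¬ Impatient w c0 pr (s + (k : ZMod n)) t0)
    (lL lR : List (ZMod n))
    (hL : IsPseudoTranscript w c0 pr t0 (leftCombatants w c0 s) lL)
    (hR : IsPseudoTranscript w c0 pr t0 (rightCombatants w c0 s len) lR)
    (hLsum : NonnegPartialSums c0 lL) (hRsum : NonnegPartialSums c0 lR) :
    ∃ t : ℕ, ∀ t', t ≤ t' → ∀ k < len, traj w c0 pr t' (s + (k : ZMod n)) = true := by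
  classical
  obtain ⟨hlen, hbig, hminL, hminR⟩ := hinc
  have hw1 : (1 : ℝ) ≤ Real.sqrt w := Real.one_le_sqrt.mpr (by exact_mod_cast hw)
  have hbias0 : ∀ k < len, 1 ≤ bias w c0 (s + (k : ZMod n)) := by
    intro k hk
    have h1 : (1 : ℝ) < ((bias w c0 (s + (k : ZMod n)) : ℤ) : ℝ) :=
      lt_of_le_of_lt hw1 (hbig k hk)
    have h2 : (1 : ℤ) < bias w c0 (s + (k : ZMod n)) := by exact_mod_cast h1
    omega
  -- The main invariant: up to time `t0`, every node of `F` has bias at least 1.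
  have Inv : ∀ u, u ≤ t0 → ∀ v ≤ u, ∀ k < len,
      1 ≤ bias w (traj w c0 pr v) (s + (k : ZMod n)) := by
    intro u
    induction u with
    | zero =>
      intro _ v hv k hk
      have hv0 : v = 0 := by omega
      subst hv0
      exact hbias0 k hk
    | succ u ih =>
      intro hu1 v hv k hk
      rcases Nat.lt_or_ge v (u + 1) with hlt | hge
      · exact ih (by omega) v (by omega) k hk
      · have hveq : v = u + 1 := by omega
        subst hveq
        have hinvF : ∀ v' ≤ u, ∀ q ∈ Fset s len, 1 ≤ bias w (traj w c0 pr v') q := by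
          intro v' hv' q hqm
          obtain ⟨k', hk', rfl⟩ := mem_Fset.mp hqm
          exact ih (by omega) v' hv' k' hk'
        have hu : u < t0 := by omega
        rcases le_or_gt k w with hkw | hkw
        · -- left defender zone
          refine core_bias hn (Fset s len)
            ((ALs w s).filter (fun i => c0 i = true))
            ((DLs w s).filter (fun i => c0 i = false)) u
            (fun q hq => (Finset.mem_filter.mp hq).2)
            (fun q hq => (Finset.mem_filter.mp hq).2)
            ?_ hinvF (s + (k : ZMod n)) ?_ ?_ ?_ ?_
          · intro q hq
            obtain ⟨k', hk', rfl⟩ := Finset.mem_image.mp (Finset.mem_filter.mp hq).1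
            simp only [Finset.mem_range] at hk'
            exact mem_Fset.mpr ⟨k', by omega, rfl⟩
          · exact (Finset.filter_subset _ _).trans (DLs_subset_wSet s hn hkw)
          · intro q hq hqF hqt
            rcases cover_left s hn hlen hkw q hq with h | h
            · exact absurd h hqF
            · exact Finset.mem_filter.mpr ⟨h, hqt⟩
          · have hT : IsPseudoTranscript w c0 pr t0
                (((ALs w s).filter (fun i => c0 i = true)) ∪
                  ((DLs w s).filter (fun i => c0 i = false))) lL := by
              rw [← leftCombatants_eq]
              exact hL
            exact count_of_transcript hu _ _
              (fun q hq => (Finset.mem_filter.mp hq).2)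
              (fun q hq => (Finset.mem_filter.mp hq).2) lL hT hLsum
          · rw [← bias_left_id w s c0 hn]
            exact hminL k (by omega)
        · rcases le_or_gt len (k + w + 1) with hkr | hkr
          · -- right defender zone
            refine core_bias hn (Fset s len)
              ((ARs w s len).filter (fun i => c0 i = true))
              ((DRs w s len).filter (fun i => c0 i = false)) u
              (fun q hq => (Finset.mem_filter.mp hq).2)
              (fun q hq => (Finset.mem_filter.mp hq).2)
              ?_ hinvF (s + (k : ZMod n)) ?_ ?_ ?_ ?_
            · intro q hq
              obtain ⟨k', hk', rfl⟩ := Finset.mem_image.mp (Finset.mem_filter.mp hq).1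
              simp only [Finset.mem_range] at hk'
              exact mem_Fset.mpr ⟨len - 1 - k', by omega, rfl⟩
            · exact (Finset.filter_subset _ _).trans
                (DRs_subset_wSet s hn hlen hkr hk)
            · intro q hq hqF hqt
              rcases cover_right s hn hlen hkr hk q hq with h | h
              · exact absurd h hqF
              · exact Finset.mem_filter.mpr ⟨h, hqt⟩
            · have hT : IsPseudoTranscript w c0 pr t0
                  (((ARs w s len).filter (fun i => c0 i = true)) ∪
                    ((DRs w s len).filter (fun i => c0 i = false))) lR := by
                rw [← rightCombatants_eq]
                exact hR
              exact count_of_transcript hu _ _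
                (fun q hq => (Finset.mem_filter.mp hq).2)
                (fun q hq => (Finset.mem_filter.mp hq).2) lR hT hRsum
            · have hmm := hminR (len - 1 - k) (by omega)
              rw [show len - 1 - (len - 1 - k) = k by omega] at hmm
              calc 2 * ((((ARs w s len).filter (fun i => c0 i = true)).card : ℤ))
                    - 2 * ((((DRs w s len).filter (fun i => c0 i = false)).card : ℤ)) + 1
                  = bias w c0 (s + ((len - 1 : ℕ) : ZMod n)) :=
                    (bias_right_id w s c0 hn hlen).symm
                _ ≤ bias w c0 (s + (k : ZMod n)) := hmm
          · -- interior zone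
            refine core_bias hn (Fset s len) ∅ ∅ u (by simp) (by simp)
              (Finset.empty_subset _) hinvF (s + (k : ZMod n))
              (Finset.empty_subset _) ?_ (by simp) ?_
            · intro q hq hqF _
              exact absurd (cover_mid s hkw (by omega) q hq) hqF
            · simpa using hbias0 k hk
  have hinvF_t0 : ∀ v < t0, ∀ q ∈ Fset s len, 1 ≤ bias w (traj w c0 pr v) q := by
    intro v hv q hqm
    obtain ⟨k', hk', rfl⟩ := mem_Fset.mp hqm
    exact Inv t0 le_rfl v (by omega) k' hk'
  have hAllX : ∀ k < len, traj w c0 pr t0 (s + (k : ZMod n)) = true := by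
    intro k hk
    rcases Bool.eq_false_or_eq_true (c0 (s + (k : ZMod n))) with hc | hc
    · exact stay_true hinvF_t0 t0 le_rfl _ (mem_Fset.mpr ⟨k, hk, rfl⟩) hc
    · by_cases hsel : ∃ v < t0, selectedWith w c0 pr (s + (k : ZMod n)) v
      · exact def_flipped hinvF_t0 (mem_Fset.mpr ⟨k, hk, rfl⟩) hc hsel
      · exfalso
        push_neg at hsel
        apply ht0 k hk
        have hq : traj w c0 pr t0 (s + (k : ZMod n)) = false := by
          by_contra hne'
          have hne2 : traj w c0 pr t0 (s + (k : ZMod n)) ≠ c0 (s + (k : ZMod n)) := by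
            rw [hc]; exact hne'
          obtain ⟨v, hv, hs⟩ := change_exists_sel hne2
          exact hsel v hv hs
        refine ⟨unhappy_of_bias_false hq (Inv t0 le_rfl t0 le_rfl k hk), ?_⟩
        exact le_satTime_of_not_sel hsel
  have habsorb : ∀ t, ∀ k < len, traj w c0 pr (t0 + t) (s + (k : ZMod n)) = true := by
    intro t
    induction t with
    | zero => simpa using hAllX
    | succ t ih =>
      intro k hk
      have hh : happy w (traj w c0 pr (t0 + t)) (s + (k : ZMod n)) :=
        happy_of_all_true hlen (fun k' hk' => ih k' hk') hk
      rw [show t0 + (t + 1) = (t0 + t) + 1 from rfl, traj_stable_of_happy hh]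
      exact ih k hk
  refine ⟨t0, fun t' ht' k hk => ?_⟩
  have := habsorb (t' - t0) k hk
  rwa [show t0 + (t' - t0) = t' by omega] at this

end Schelling
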